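/- Let φ : [m] → [n] be an arbitrary function between the sets [m] = {0,...,m} and [n] = {0,...,n} with n ≥ 1. Then there exist w ≥ 1 and an order-preserving map α : [m] → [2^w n] such that φ = χ_n^w ∘ α, where χ_n^w = χ_n ∘ χ_{2n} ∘ ⋯ ∘ χ_{2^{w−1} n}. Consequently, the category Υ of the sets [n] and arbitrary functions is generated by the order-preserving maps together with the fold maps χ_n. -/

import Mathlib

/-- The fold map `χ_n : [2n] → [n]`, `i ↦ |n − i|`, as a function on `ℕ`. -/
def chiN (n : ℕ) (i : ℕ) : ℕ := max n i - min n i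

/-- The iterated fold `χ_n^w = χ_n ∘ χ_{2n} ∘ χ_{4n} ∘ ⋯ ∘ χ_{2^{w−1} n} : [2^w n] → [n]`
(with `χ_n^0 = id`). -/
def chiPow (n : ℕ) : ℕ → (ℕ → ℕ)
  | 0 => id
  | w + 1 => chiPow n w ∘ chiN (2 ^ w * n)

lemma chiN_symm (n a b : ℕ) (h : a = b ∨ a + b = 2 * n) : chiN n a = chiN n b := by
  unfold chiN; omega

lemma chiPow_eq_mod (n : ℕ) (hn : 1 ≤ n) :
    ∀ w, 1 ≤ w → ∀ x ≤ 2 ^ w * n, chiPow n w x = chiN n (x % (2 * n)) := by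
  intro w
  induction w with
  | zero => omega
  | succ w ih =>
    intro _ x hx
    rcases Nat.eq_zero_or_pos w with hw | hw
    · subst hw
      simp only [chiPow, Function.comp_apply, pow_zero, one_mul, id]
      have h2 : x ≤ 2 * n := by simpa [pow_succ] using hx
      rcases lt_or_eq_of_le h2 with h | h
      · rw [Nat.mod_eq_of_lt h]
      · subst h
        rw [Nat.mod_self]
        exact chiN_symm n (2 * n) 0 (by omega)
    · have hpw : 2 ^ (w + 1) * n = 2 * (2 ^ w * n) := by ring
      have hxb : chiN (2 ^ w * n) x ≤ 2 ^ w * n := by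
        unfold chiN; omega
      have := ih hw (chiN (2 ^ w * n) x) hxb
      simp only [chiPow, Function.comp_apply]
      rw [this]
      -- now compare mods
      have hdvd : 2 * n ∣ 2 ^ w * n := by
        obtain ⟨w', rfl⟩ := Nat.exists_eq_add_of_le hw
        exact ⟨2 ^ w', by rw [pow_add, pow_one]; ring⟩
      set y := chiN (2 ^ w * n) x with hy
      apply chiN_symm
      have ha : y % (2 * n) < 2 * n := Nat.mod_lt _ (by omega)
      have hb : x % (2 * n) < 2 * n := Nat.mod_lt _ (by omega)
      rcases le_or_gt x (2 ^ w * n) with h | h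
      · -- y = 2^w n - x, so y + x = 2^w n ≡ 0
        have hyx : y + x = 2 ^ w * n := by unfold chiN at hy; omega
        clear_value y
        have h0 : (y % (2 * n) + x % (2 * n)) % (2 * n) = 0 := by
          rw [← Nat.add_mod, hyx]
          obtain ⟨c, hc⟩ := hdvd
          rw [hc]
          exact Nat.mul_mod_right _ _
        obtain ⟨c, hc⟩ := Nat.dvd_of_mod_eq_zero h0
        have hc2 : c < 2 := by
          by_contra hge
          push_neg at hge
          have : 2 * n * 2 ≤ 2 * n * c := Nat.mul_le_mul_left _ hge
          omega
        interval_cases c <;> omega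
      · -- y = x - 2^w n, so x = y + 2^w n
        have hyx : x = y + 2 ^ w * n := by unfold chiN at hy; omega
        left
        obtain ⟨c, hc⟩ := hdvd
        rw [hyx, hc, Nat.add_mul_mod_self_left]

theorem factor_through_folds (m n : ℕ) (hn : 1 ≤ n) (φ : Fin (m + 1) → Fin (n + 1)) :
    ∃ w : ℕ, 1 ≤ w ∧ ∃ α : Fin (m + 1) → Fin (2 ^ w * n + 1),
      Monotone α ∧ ∀ k : Fin (m + 1), (φ k : ℕ) = chiPow n w (α k : ℕ) := by
  refine ⟨m + 1, by omega, ?_⟩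
  have hpow : 2 * m + 1 ≤ 2 ^ (m + 1) := by
    have := Nat.lt_two_pow_self (n := m)
    rw [pow_succ]; omega
  have hbound : ∀ k : Fin (m + 1), 2 * n * k + (n - φ k) < 2 ^ (m + 1) * n + 1 := by
    intro k
    have hk : (k : ℕ) ≤ m := Nat.lt_succ_iff.mp k.isLt
    have : 2 * n * k + (n - φ k) ≤ 2 * n * m + n := by
      have : 2 * n * k ≤ 2 * n * m := Nat.mul_le_mul_left _ hk
      omega
    calc 2 * n * k + (n - φ k) ≤ 2 * n * m + n := this
      _ = n * (2 * m + 1) := by ring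
      _ ≤ n * 2 ^ (m + 1) := Nat.mul_le_mul_left _ hpow
      _ < 2 ^ (m + 1) * n + 1 := by rw [Nat.mul_comm]; omega
  refine ⟨fun k => ⟨2 * n * k + (n - φ k), hbound k⟩, ?_, ?_⟩
  · intro k l hkl
    rcases lt_or_eq_of_le hkl with h | h
    · have hkl' : (k : ℕ) + 1 ≤ (l : ℕ) := h
      have hφk : (n - (φ k : ℕ)) ≤ n := Nat.sub_le _ _
      have hexp : 2 * n * ((k : ℕ) + 1) = 2 * n * k + 2 * n := by ring
      have h2 : 2 * n * ((k : ℕ) + 1) ≤ 2 * n * l := Nat.mul_le_mul_left _ hkl'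
      have h3 : (n - (φ l : ℕ)) ≤ n := Nat.sub_le _ _
      exact Fin.mk_le_mk.mpr (by omega)
    · simp [h]
  · intro k
    have hφ : (φ k : ℕ) ≤ n := Nat.lt_succ_iff.mp (φ k).isLt
    have hx : 2 * n * k + (n - φ k) ≤ 2 ^ (m + 1) * n := by
      have := hbound k; omega
    rw [chiPow_eq_mod n hn (m + 1) (by omega) _ hx]
    have hmod : (2 * n * k + (n - (φ k : ℕ))) % (2 * n) = n - φ k := by
      rw [Nat.mul_add_mod]
      exact Nat.mod_eq_of_lt (by omega)
    rw [hmod]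
    unfold chiN
    omega
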